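/- The pointwise-closure property fails for dilation-invariant spaces that are not translation invariant: let P be the set of prime numbers and let V be the linear span in the one-variable polynomial ring ℝ[X] of the monomials {X^k : k ∈ P ∪ 2P ∪ {0}} (where 2P = {2p : p ∈ P}). Then V is dilation invariant, X^100 does not belong to V, and there exists a sequence (p_n) of polynomials in V such that p_n(x) converges to x^100 for every x ∈ ℝ. -/

import Mathlib

open Polynomial Filter Set intervalIntegral

namespace Stmt10Aux

noncomputable def ev (l : List (ℕ × ℝ)) (x : ℝ) : ℝ :=
  (l.map (fun kc => kc.2 * x ^ kc.1)).sum

noncomputable def stepc (lm : ℕ) (l : List (ℕ × ℝ)) : List (ℕ × ℝ) :=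
  ((lm, (l.map (fun kc => kc.2 * lm / ((kc.1 : ℝ) - lm))).sum) ::
    l.map (fun kc => (kc.1, -(kc.2 * lm / ((kc.1 : ℝ) - lm)))))

noncomputable def lam (j : ℕ) : ℕ := Nat.nth Nat.Prime (j + 100)

noncomputable def ll : ℕ → List (ℕ × ℝ)
  | 0 => [(50, 1)]
  | n + 1 => stepc (lam n) (ll n)

noncomputable def cc : ℕ → ℝ
  | 0 => 1
  | n + 1 => cc n * lam n / ((lam n : ℝ) - 50)

lemma lam_prime (j : ℕ) : Nat.Prime (lam j) :=
  Nat.nth_mem_of_infinite Nat.infinite_setOf_prime _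

lemma lam_strictMono : StrictMono lam := fun a b h =>
  (Nat.nth_lt_nth Nat.infinite_setOf_prime).2 (by omega)

lemma lam_ge (j : ℕ) : 100 ≤ lam j := by
  have h := (Nat.nth_strictMono (p := Nat.Prime) Nat.infinite_setOf_prime).le_apply (x := j + 100)
  exact le_trans (by omega) h

lemma ev_cons (kc : ℕ × ℝ) (l : List (ℕ × ℝ)) (x : ℝ) :
    ev (kc :: l) x = kc.2 * x ^ kc.1 + ev l x := by simp [ev]

lemma continuous_ev (l : List (ℕ × ℝ)) : Continuous (ev l) := by
  induction l with
  | nil => exact (continuous_const (y := (0:ℝ))).congr (fun x => by simp [ev])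
  | cons kc l ih => simp only [funext (ev_cons kc l)]; fun_prop

lemma shape (n : ℕ) : ∃ l', ll n = l' ++ [(50, cc n)] ∧
    ∀ kc ∈ l', ∃ j, j < n ∧ kc.1 = lam j := by
  induction n with
  | zero => exact ⟨[], by simp [ll, cc], by simp⟩
  | succ n ih =>
      obtain ⟨l', hl', hmem⟩ := ih
      refine ⟨(lam n, ((ll n).map (fun kc => kc.2 * lam n / ((kc.1 : ℝ) - lam n))).sum) ::
        l'.map (fun kc => (kc.1, -(kc.2 * lam n / ((kc.1 : ℝ) - lam n)))), ?_, ?_⟩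
      · show stepc (lam n) (ll n) = _
        rw [stepc, hl']
        simp only [List.map_append, List.map_cons, List.map_nil, List.cons_append]
        have hc : -(cc n * (lam n:ℝ) / (((50:ℕ) : ℝ) - lam n)) = cc (n+1) := by
          show _ = cc n * lam n / ((lam n : ℝ) - 50)
          rw [show ((lam n:ℝ) - 50) = -(((50:ℕ):ℝ) - (lam n:ℝ)) by push_cast; ring, div_neg]
        rw [hc]
      · intro kc hkc
        rcases List.mem_cons.1 hkc with h | h
        · exact ⟨n, by omega, by rw [h]⟩
        · obtain ⟨ab, hab, rfl⟩ := List.mem_map.1 h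
          obtain ⟨j, hj, hje⟩ := hmem ab hab
          exact ⟨j, by omega, hje⟩

lemma exps (n : ℕ) : ∀ kc ∈ ll n, kc.1 = 50 ∨ ∃ j, j < n ∧ kc.1 = lam j := by
  obtain ⟨l', hl', hmem⟩ := shape n
  intro kc hkc
  rw [hl'] at hkc
  rcases List.mem_append.1 hkc with h | h
  · exact Or.inr (hmem kc h)
  · simp only [List.mem_singleton] at h
    exact Or.inl (by rw [h])

lemma exps_lt (n : ℕ) : ∀ kc ∈ ll n, kc.1 < lam n := by
  intro kc hkc
  rcases exps n kc hkc with h | ⟨j, hj, h⟩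
  · have := lam_ge n; omega
  · rw [h]; exact lam_strictMono hj

lemma exps_ne_zero (n : ℕ) : ∀ kc ∈ ll n, kc.1 ≠ 0 := by
  intro kc hkc
  rcases exps n kc hkc with h | ⟨j, hj, h⟩
  · omega
  · have := lam_ge j; omega

lemma pos_of_mem_uIcc {x t : ℝ} (hx : 0 < x) (ht : t ∈ Set.uIcc x 1) : 0 < t := by
  have h1 : min x 1 ≤ t := (Set.mem_uIcc.mp ht).elim (fun h => le_trans (min_le_left _ _) h.1)
    (fun h => le_trans (min_le_right _ _) h.1)
  exact lt_of_lt_of_le (lt_min hx one_pos) h1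

lemma contOn_zpow {x : ℝ} (hx : 0 < x) (e : ℤ) :
    ContinuousOn (fun t : ℝ => t ^ e) (Set.uIcc x 1) := by
  apply (continuousOn_zpow₀ e).mono
  intro t ht
  exact ne_of_gt (pos_of_mem_uIcc hx ht)

lemma intInt {x : ℝ} (hx : 0 < x) (l : List (ℕ × ℝ)) (e : ℤ) :
    IntervalIntegrable (fun t => ev l t * t ^ e) MeasureTheory.volume x 1 :=
  ContinuousOn.intervalIntegrable (((continuous_ev l).continuousOn).mul (contOn_zpow hx e))

lemma integral_term {x : ℝ} (hx : 0 < x) (hx1 : x ≤ 1) (k : ℕ) (c : ℝ) (e : ℤ)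
    (he : (k : ℤ) + e ≠ -1) :
    ∫ t in x..1, c * t ^ k * t ^ e
      = c * ((1 - x ^ ((k:ℤ) + e + 1)) / (((k:ℤ) + e + 1 : ℤ) : ℝ)) := by
  have h0 : (0:ℝ) ∉ Set.uIcc x 1 := fun h => absurd (pos_of_mem_uIcc hx h) (lt_irrefl 0)
  have hcong : Set.EqOn (fun t : ℝ => c * t ^ k * t ^ e) (fun t : ℝ => c * t ^ ((k:ℤ) + e))
      (Set.uIcc x 1) := by
    intro t ht
    have htp : (0:ℝ) < t := pos_of_mem_uIcc hx ht
    simp only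
    rw [mul_assoc, ← zpow_natCast t k, ← zpow_add₀ (ne_of_gt htp)]
  rw [intervalIntegral.integral_congr hcong, intervalIntegral.integral_const_mul,
    integral_zpow (Or.inr ⟨he, h0⟩)]
  rw [one_zpow]; push_cast; ring

lemma integral_ev {x : ℝ} (hx : 0 < x) (hx1 : x ≤ 1) (l : List (ℕ × ℝ)) (e : ℤ)
    (he : ∀ kc ∈ l, (kc.1 : ℤ) + e ≠ -1) :
    ∫ t in x..1, ev l t * t ^ e
      = (l.map (fun kc =>
          kc.2 * ((1 - x ^ ((kc.1:ℤ) + e + 1)) / (((kc.1:ℤ) + e + 1 : ℤ) : ℝ)))).sum := by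
  induction l with
  | nil => simp [ev]
  | cons kc l ih =>
      have h1 : IntervalIntegrable (fun t : ℝ => kc.2 * t ^ kc.1 * t ^ e)
          MeasureTheory.volume x 1 := by
        apply ContinuousOn.intervalIntegrable
        exact (ContinuousOn.mul (by fun_prop) (contOn_zpow hx e))
      have h2 := intInt hx l e
      have hsplit : (fun t : ℝ => ev (kc :: l) t * t ^ e)
          = fun t => (kc.2 * t ^ kc.1 * t ^ e) + (ev l t * t ^ e) := by
        funext t; rw [ev_cons]; ring
      rw [hsplit, intervalIntegral.integral_add h1 h2, ih (fun a ha => he a (by simp [ha])),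
        integral_term hx hx1 kc.1 kc.2 e (he kc (by simp))]
      simp

lemma term_id {x : ℝ} (hx : 0 < x) {k lm : ℕ} (hk : k < lm) (c : ℝ) :
    (lm : ℝ) * x ^ lm *
        (c * ((1 - x ^ ((k:ℤ) + (-(lm:ℤ) - 1) + 1)) / (((k:ℤ) + (-(lm:ℤ) - 1) + 1 : ℤ) : ℝ)))
      = (c * lm / ((k:ℝ) - lm)) * x ^ lm + (-(c * lm / ((k:ℝ) - lm))) * x ^ k := by
  have hexp : (k:ℤ) + (-(lm:ℤ) - 1) + 1 = (k:ℤ) - lm := by ring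
  rw [hexp]
  have hxx : (x:ℝ) ^ lm * x ^ ((k:ℤ) - (lm:ℤ)) = x ^ k := by
    rw [← zpow_natCast x lm, ← zpow_add₀ (ne_of_gt hx), ← zpow_natCast x k]
    congr 1
    ring
  have hd : ((k:ℝ) - lm) ≠ 0 := by
    have : (k:ℝ) < lm := by exact_mod_cast hk
    linarith
  rw [← hxx]
  push_cast
  field_simp
  ring

lemma ev_stepc_eq_sum {x : ℝ} (l : List (ℕ × ℝ)) (lm : ℕ) :
    ev (stepc lm l) x
      = (l.map (fun kc => (kc.2 * lm / ((kc.1 : ℝ) - lm)) * x ^ lm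
          + (-(kc.2 * lm / ((kc.1 : ℝ) - lm))) * x ^ kc.1)).sum := by
  simp only [ev, stepc, List.map_cons, List.sum_cons, List.map_map, List.sum_map_add,
    ← List.sum_map_mul_right]
  congr 2

lemma ev_stepc {x : ℝ} (hx : 0 < x) (hx1 : x ≤ 1) (l : List (ℕ × ℝ)) (lm : ℕ)
    (hlm : ∀ kc ∈ l, kc.1 < lm) :
    ev (stepc lm l) x = lm * x ^ lm * ∫ t in x..1, ev l t * t ^ (-(lm:ℤ) - 1) := by
  rw [integral_ev hx hx1 l _ (fun kc hkc => by have := hlm kc hkc; omega),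
    ← List.sum_map_mul_left, ev_stepc_eq_sum]
  exact congrArg _ (List.map_congr_left (fun kc hkc => (term_id hx (hlm kc hkc) kc.2).symm))

lemma ev_zero (l : List (ℕ × ℝ)) (h : ∀ kc ∈ l, kc.1 ≠ 0) : ev l 0 = 0 := by
  induction l with
  | nil => simp [ev]
  | cons kc l ih =>
      rw [ev_cons, ih (fun a ha => h a (by simp [ha])), zero_pow (h kc (by simp))]
      ring

lemma ev_bound : ∀ n : ℕ, ∀ x ∈ Set.Icc (0:ℝ) 1, |ev (ll n) x| ≤ 1 := by
  intro n
  induction n with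
  | zero =>
      intro x hx
      have : ev (ll 0) x = x ^ 50 := by simp [ll, ev]
      rw [this, abs_pow]
      exact pow_le_one₀ (abs_nonneg x) (abs_le.2 ⟨by linarith [hx.1], hx.2⟩)
  | succ n ih =>
      intro x hx
      rcases eq_or_lt_of_le hx.1 with h0 | hxpos
      · rw [← h0, ev_zero _ (exps_ne_zero (n+1))]
        simp
      · have hx1 : x ≤ 1 := hx.2
        have hlm := exps_lt n
        have hL : (0:ℝ) < lam n := by
          have := lam_ge n; positivity
        set L : ℕ := lam n with hLdef
        set e : ℤ := -(L:ℤ) - 1 with hedef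
        have key : ev (ll (n+1)) x = L * x ^ L * ∫ t in x..1, ev (ll n) t * t ^ e :=
          ev_stepc hxpos hx1 (ll n) L hlm
        have habs : |∫ t in x..1, ev (ll n) t * t ^ e| ≤ (x ^ (-(L:ℤ)) - 1) / L := by
          have step1 : |∫ t in x..1, ev (ll n) t * t ^ e|
              ≤ ∫ t in x..1, |ev (ll n) t * t ^ e| :=
            intervalIntegral.abs_integral_le_integral_abs hx1
          have hint1 : IntervalIntegrable (fun t => |ev (ll n) t * t ^ e|)
              MeasureTheory.volume x 1 :=
            ContinuousOn.intervalIntegrable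
              ((((continuous_ev (ll n)).continuousOn).mul (contOn_zpow hxpos e)).abs)
          have hint2 : IntervalIntegrable (fun t : ℝ => t ^ e) MeasureTheory.volume x 1 :=
            ContinuousOn.intervalIntegrable (contOn_zpow hxpos e)
          have step2 : (∫ t in x..1, |ev (ll n) t * t ^ e|) ≤ ∫ t in x..1, (t:ℝ) ^ e := by
            apply intervalIntegral.integral_mono_on hx1 hint1 hint2
            intro t ht
            have htpos : 0 < t := lt_of_lt_of_le hxpos ht.1
            have hzp : (0:ℝ) < t ^ e := zpow_pos htpos e
            rw [abs_mul, abs_of_pos hzp]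
            have : |ev (ll n) t| ≤ 1 := ih t ⟨le_of_lt htpos, ht.2⟩
            nlinarith [abs_nonneg (ev (ll n) t)]
          have step3 : (∫ t in x..1, (t:ℝ) ^ e) = (x ^ (-(L:ℤ)) - 1) / L := by
            have h0 : (0:ℝ) ∉ Set.uIcc x 1 :=
              fun h => absurd (pos_of_mem_uIcc hxpos h) (lt_irrefl 0)
            have hne : e ≠ -1 := by
              have := lam_ge n
              simp only [hedef, hLdef]
              omega
            rw [integral_zpow (Or.inr ⟨hne, h0⟩)]
            have : e + 1 = -(L:ℤ) := by rw [hedef]; ring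
            rw [this, one_zpow]
            have he' : ((e:ℤ):ℝ) + 1 = -(L:ℝ) := by rw [hedef]; push_cast; ring
            rw [he']
            have hLne : (L:ℝ) ≠ 0 := ne_of_gt hL
            field_simp
            ring
          linarith [step1, step2, step3.le, step3.ge]
        have hxLpos : (0:ℝ) < x ^ L := pow_pos hxpos L
        have hinv : x ^ L * x ^ (-(L:ℤ)) = 1 := by
          rw [← zpow_natCast x L, ← zpow_add₀ (ne_of_gt hxpos)]
          simp
        rw [key, abs_mul, abs_mul, abs_of_pos hL, abs_of_pos hxLpos]
        calc (L:ℝ) * x ^ L * |∫ t in x..1, ev (ll n) t * t ^ e|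
            ≤ L * x ^ L * ((x ^ (-(L:ℤ)) - 1) / L) := by
              apply mul_le_mul_of_nonneg_left habs
              positivity
          _ = x ^ L * x ^ (-(L:ℤ)) - x ^ L := by field_simp
          _ = 1 - x ^ L := by rw [hinv]
          _ ≤ 1 := by linarith [hxLpos]


lemma cc_pos (n : ℕ) : 0 < cc n := by
  induction n with
  | zero => norm_num [cc]
  | succ n ih =>
      have h : (100:ℝ) ≤ lam n := by exact_mod_cast lam_ge n
      show 0 < cc n * lam n / ((lam n : ℝ) - 50)
      have : (0:ℝ) < (lam n : ℝ) - 50 := by linarith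
      positivity

lemma cc_ge (n : ℕ) :
    Real.exp (50 * ∑ j ∈ Finset.range n, (1:ℝ) / lam j) ≤ cc n := by
  induction n with
  | zero => simp [cc]
  | succ n ih =>
      have h : (100:ℝ) ≤ lam n := by exact_mod_cast lam_ge n
      set d : ℝ := (lam n : ℝ) with hd
      have hd0 : (0:ℝ) < d := by linarith
      have hd50 : (0:ℝ) < d - 50 := by linarith
      have hkey : Real.exp (50 / d) ≤ d / (d - 50) := by
        have h1 : (d - 50) / d ≤ Real.exp (-(50 / d)) := by
          have h0 := Real.add_one_le_exp (-(50 / d))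
          have h2 : -(50/d) + 1 = (d - 50)/d := by field_simp; ring
          linarith [h2 ▸ h0]
        rw [Real.exp_neg] at h1
        have h5 : d - 50 ≤ (Real.exp (50/d))⁻¹ * d := (div_le_iff₀ hd0).1 h1
        have hinv : (Real.exp (50/d))⁻¹ * Real.exp (50/d) = 1 :=
          inv_mul_cancel₀ (ne_of_gt (Real.exp_pos _))
        rw [le_div_iff₀ hd50]
        nlinarith [Real.exp_pos (50/d)]
      have hsum : (50:ℝ) * ∑ j ∈ Finset.range (n+1), (1:ℝ) / lam j
          = 50 * ∑ j ∈ Finset.range n, (1:ℝ) / lam j + 50 / d := by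
        rw [Finset.sum_range_succ]; ring
      rw [hsum, Real.exp_add]
      show _ ≤ cc n * d / (d - 50)
      rw [mul_div_assoc]
      exact mul_le_mul ih hkey (le_of_lt (Real.exp_pos _)) (le_of_lt (cc_pos n))

lemma not_summable_lam : ¬ Summable (fun j => (1:ℝ) / lam j) := by
  intro h
  have h1 : Summable (fun j => (1:ℝ) / Nat.nth Nat.Prime j) :=
    (_root_.summable_nat_add_iff (f := fun j => (1:ℝ) / Nat.nth Nat.Prime j) 100).1 h
  have hinj : Function.Injective (fun p : Nat.Primes => Nat.count Nat.Prime p.1) := by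
    intro p q hpq
    have hp := Nat.nth_count p.2
    have hq := Nat.nth_count q.2
    simp only at hpq
    apply Subtype.ext
    rw [← hp, ← hq, hpq]
  have h3 := h1.comp_injective hinj
  have h4 : ((fun j => (1:ℝ) / Nat.nth Nat.Prime j) ∘
      (fun p : Nat.Primes => Nat.count Nat.Prime p.1)) = fun p : Nat.Primes => (1:ℝ) / p := by
    funext p
    simp [Function.comp, Nat.nth_count p.2]
  exact Nat.Primes.not_summable_one_div (h4 ▸ h3)

lemma tendsto_cc : Tendsto cc atTop atTop := by
  have hs : Tendsto (fun n => ∑ j ∈ Finset.range n, (1:ℝ) / lam j) atTop atTop := by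
    refine (not_summable_iff_tendsto_nat_atTop_of_nonneg ?_).1 not_summable_lam
    intro j
    positivity
  have h2 : Tendsto (fun n => (50:ℝ) * ∑ j ∈ Finset.range n, (1:ℝ) / lam j) atTop atTop :=
    hs.const_mul_atTop (by norm_num)
  exact tendsto_atTop_mono cc_ge (Real.tendsto_exp_atTop.comp h2)

noncomputable def PP (n : ℕ) : Polynomial ℝ :=
  ((ll n).map (fun kc => C kc.2 * X ^ (2 * kc.1))).sum

lemma PP_eval (n : ℕ) (x : ℝ) : (PP n).eval x = ev (ll n) (x ^ 2) := by
  rw [PP]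
  generalize (ll n) = l
  induction l with
  | nil => simp [ev]
  | cons kc l ih =>
      rw [List.map_cons, List.sum_cons, eval_add, ih, ev_cons]
      simp [pow_mul]

lemma list_sum_mem_submodule (W : Submodule ℝ (Polynomial ℝ)) (l : List (Polynomial ℝ))
    (h : ∀ q ∈ l, q ∈ W) : l.sum ∈ W := by
  induction l with
  | nil => simp
  | cons a l ih =>
      rw [List.sum_cons]
      exact W.add_mem (h a (by simp)) (ih (fun q hq => h q (by simp [hq])))

end Stmt10Aux

open Stmt10Aux

theorem stmt_10
    (V : Submodule ℝ (Polynomial ℝ))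
    (hV : V = Submodule.span ℝ {q : Polynomial ℝ |
      ∃ k : ℕ, (Nat.Prime k ∨ (∃ p : ℕ, Nat.Prime p ∧ k = 2 * p) ∨ k = 0) ∧
        q = X ^ k}) :
    (∀ p ∈ V, ∀ lam : ℝ, p.comp (C lam * X) ∈ V) ∧
    (X ^ 100 : Polynomial ℝ) ∉ V ∧
    ∃ pn : ℕ → Polynomial ℝ, (∀ n, pn n ∈ V) ∧
      ∀ x : ℝ, Tendsto (fun n => (pn n).eval x) atTop (nhds (x ^ 100)) := by
  subst hV
  set S : Set (Polynomial ℝ) := {q : Polynomial ℝ |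
      ∃ k : ℕ, (Nat.Prime k ∨ (∃ p : ℕ, Nat.Prime p ∧ k = 2 * p) ∨ k = 0) ∧
        q = X ^ k} with hS
  have part1 : ∀ p ∈ Submodule.span ℝ S, ∀ lam0 : ℝ,
      p.comp (C lam0 * X) ∈ Submodule.span ℝ S := by
    intro p hp lam0
    have hle : Submodule.span ℝ S ≤
        Submodule.comap (Polynomial.aeval (C lam0 * X)).toLinearMap (Submodule.span ℝ S) := by
      rw [Submodule.span_le]
      rintro q ⟨k, hk, rfl⟩
      simp only [SetLike.mem_coe, Set.mem_setOf_eq, Submodule.mem_comap,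
        AlgHom.toLinearMap_apply, map_pow, aeval_X]
      have hc : (C lam0 * X : Polynomial ℝ) ^ k = (lam0 ^ k) • (X ^ k : Polynomial ℝ) := by
        rw [mul_pow, ← C_pow, smul_eq_C_mul]
      rw [hc]
      exact Submodule.smul_mem _ _ (Submodule.subset_span ⟨k, hk, rfl⟩)
    have hmem := hle hp
    simp only [Submodule.mem_comap, AlgHom.toLinearMap_apply] at hmem
    have hco : Polynomial.aeval (C lam0 * X) p = p.comp (C lam0 * X) := by
      rw [Polynomial.comp, Polynomial.aeval_def, Polynomial.algebraMap_eq]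
    rwa [hco] at hmem
  have part2 : (X ^ 100 : Polynomial ℝ) ∉ Submodule.span ℝ S := by
    intro hmem
    have hle : Submodule.span ℝ S ≤ LinearMap.ker (lcoeff ℝ 100) := by
      rw [Submodule.span_le]
      rintro q ⟨k, hk, rfl⟩
      have hk100 : k ≠ 100 := by
        rcases hk with h | ⟨p, hp, rfl⟩ | h
        · rintro rfl; exact absurd h (by decide)
        · intro h2
          have : p = 50 := by omega
          subst this
          exact absurd hp (by decide)
        · omega
      simp [SetLike.mem_coe, LinearMap.mem_ker, lcoeff_apply, coeff_X_pow,
        (Ne.symm hk100)]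
    have h1 := hle hmem
    simp [LinearMap.mem_ker, lcoeff_apply, coeff_X_pow] at h1
  refine ⟨part1, part2, ?_⟩
  have hdecomp : ∀ n : ℕ, ∃ v ∈ Submodule.span ℝ S,
      PP n = C (cc n) * X ^ 100 + v := by
    intro n
    obtain ⟨l', hl', hmem⟩ := shape n
    refine ⟨(l'.map (fun kc => C kc.2 * X ^ (2 * kc.1))).sum, ?_, ?_⟩
    · apply list_sum_mem_submodule
      intro q hq
      obtain ⟨kc, hkc, rfl⟩ := List.mem_map.1 hq
      obtain ⟨j, hj, hje⟩ := hmem kc hkc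
      have hgen : (X ^ (2 * kc.1) : Polynomial ℝ) ∈ S :=
        ⟨2 * kc.1, Or.inr (Or.inl ⟨kc.1, hje ▸ lam_prime j, rfl⟩), rfl⟩
      rw [← smul_eq_C_mul]
      exact Submodule.smul_mem _ _ (Submodule.subset_span hgen)
    · rw [PP, hl']
      simp only [List.map_append, List.sum_append, List.map_cons, List.map_nil,
        List.sum_cons, List.sum_nil]
      ring
  choose vv hvv hPPeq using hdecomp
  have happrox : ∀ n : ℕ, ∀ x : ℝ, |x| ≤ 1 →
      |x ^ 100 - ((-(cc n)⁻¹) • vv n).eval x| ≤ (cc n)⁻¹ := by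
    intro n x hx
    have hccp := cc_pos n
    have hPP := congrArg (Polynomial.eval x) (hPPeq n)
    simp only [eval_add, eval_mul, eval_C, eval_pow, eval_X] at hPP
    have hB : |ev (ll n) (x ^ 2)| ≤ 1 := by
      apply ev_bound n
      constructor
      · positivity
      · nlinarith [abs_nonneg x, sq_abs x]
    rw [PP_eval] at hPP
    have heval : ((-(cc n)⁻¹) • vv n).eval x = -(cc n)⁻¹ * (vv n).eval x := by
      simp
    rw [heval]
    have hkey : x ^ 100 - (-(cc n)⁻¹ * (vv n).eval x) = (cc n)⁻¹ * ev (ll n) (x ^ 2) := by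
      rw [hPP]
      field_simp
      ring
    rw [hkey, abs_mul, abs_of_pos (by positivity : (0:ℝ) < (cc n)⁻¹)]
    calc (cc n)⁻¹ * |ev (ll n) (x ^ 2)| ≤ (cc n)⁻¹ * 1 := by
          apply mul_le_mul_of_nonneg_left hB (by positivity)
      _ = (cc n)⁻¹ := by ring
  set M : ℕ → ℝ := fun n => (cc n) ^ ((1:ℝ)/200) with hM
  have hMpos : ∀ n, 0 < M n := fun n => Real.rpow_pos_of_pos (cc_pos n) _
  set pn : ℕ → Polynomial ℝ := fun n =>
    (M n ^ (100:ℕ)) • (((-(cc n)⁻¹) • vv n).comp (C (M n)⁻¹ * X)) with hpn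
  have hpnmem : ∀ n, pn n ∈ Submodule.span ℝ S := by
    intro n
    apply Submodule.smul_mem
    exact part1 _ (Submodule.smul_mem _ _ (hvv n)) _
  refine ⟨pn, hpnmem, ?_⟩
  intro x
  have hkey : ∀ n, |x| ≤ M n →
      |(pn n).eval x - x ^ 100| ≤ (cc n) ^ (-(1:ℝ)/2) := by
    intro n hxM
    have hMp := hMpos n
    have hccp := cc_pos n
    have heval : (pn n).eval x = M n ^ (100:ℕ) * ((-(cc n)⁻¹) • vv n).eval ((M n)⁻¹ * x) := by
      simp [hpn, eval_comp]
    have hx100 : x ^ 100 = M n ^ (100:ℕ) * ((M n)⁻¹ * x) ^ (100:ℕ) := by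
      rw [← mul_pow, mul_inv_cancel_left₀ (ne_of_gt hMp)]
    have hxsmall : |(M n)⁻¹ * x| ≤ 1 := by
      rw [abs_mul, abs_of_pos (by positivity : (0:ℝ) < (M n)⁻¹)]
      rw [inv_mul_le_iff₀ hMp]
      simpa using hxM
    have hb := happrox n ((M n)⁻¹ * x) hxsmall
    have hM100 : M n ^ (100:ℕ) = (cc n) ^ ((1:ℝ)/2) := by
      rw [hM, ← Real.rpow_natCast ((cc n) ^ ((1:ℝ)/200)) 100,
        ← Real.rpow_mul (le_of_lt hccp)]
      norm_num
    calc |(pn n).eval x - x ^ 100|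
        = M n ^ (100:ℕ) * |((M n)⁻¹ * x) ^ (100:ℕ) - ((-(cc n)⁻¹) • vv n).eval ((M n)⁻¹ * x)| := by
          rw [heval, hx100, ← mul_sub, abs_mul, abs_of_pos (by positivity), abs_sub_comm]
      _ ≤ M n ^ (100:ℕ) * (cc n)⁻¹ := by
          apply mul_le_mul_of_nonneg_left hb (by positivity)
      _ = (cc n) ^ (-(1:ℝ)/2) := by
          rw [hM100, ← Real.rpow_neg_one (cc n), ← Real.rpow_add hccp]
          norm_num
  have hMtop : Tendsto M atTop atTop :=
    (tendsto_rpow_atTop (by norm_num : (0:ℝ) < 1/200)).comp tendsto_cc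
  have hev : ∀ᶠ n in atTop, |x| ≤ M n := hMtop.eventually_ge_atTop |x|
  have hb0 : Tendsto (fun n => (cc n) ^ (-(1:ℝ)/2)) atTop (nhds 0) := by
    have h5 := (tendsto_rpow_neg_atTop (by norm_num : (0:ℝ) < 1/2)).comp tendsto_cc
    simpa [neg_div, Function.comp_def] using h5
  have hdiff : Tendsto (fun n => (pn n).eval x - x ^ 100) atTop (nhds 0) := by
    apply squeeze_zero_norm' _ hb0
    filter_upwards [hev] with n hn
    simpa [Real.norm_eq_abs] using hkey n hn
  have hfin := hdiff.add_const (x ^ 100)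
  simpa using hfin
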